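/- arXiv:2010.10725 — 2 statements merged into one kernel-verified Lean document; each statement's English description precedes it below -/
import Mathlib

section
/- Let k₁ > 0, let a, b, c be distinct reals with (a−b)(b−c)(c−a) > 0, let g be the element of SL(2,ℝ) sending (∞, −1, 0) to (a, b, c), and let ι₁ = (1/√k₁)·[[k₁, 1+k₁],[−k₁, −k₁]]. Then the Möbius transformation h₁ = g·ι₁·g⁻¹ satisfies h₁(a) = b, h₁(b) = a, and h₁(c) = (k₁·b·(c−a) + a·(c−b)) / (k₁·(c−a) + (c−b)). -/
open Matrix Real

/-- The Möbius action of a 2×2 real matrix on a real number (away from poles). -/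
noncomputable def moeb (M : Matrix (Fin 2) (Fin 2) ℝ) (x : ℝ) : ℝ :=
  (M 0 0 * x + M 0 1) / (M 1 0 * x + M 1 1)

lemma moeb_fin_two (p q r s x : ℝ) :
    moeb !![p, q; r, s] x = (p * x + q) / (r * x + s) := by
  simp [moeb]

lemma moeb_smul (α : ℝ) (hα : α ≠ 0) (M : Matrix (Fin 2) (Fin 2) ℝ) (x : ℝ) :
    moeb (α • M) x = moeb M x := by
  unfold moeb
  simp only [Matrix.smul_apply, smul_eq_mul]
  rw [show α * M 0 0 * x + α * M 0 1 = α * (M 0 0 * x + M 0 1) by ring,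
      show α * M 1 0 * x + α * M 1 1 = α * (M 1 0 * x + M 1 1) by ring,
      mul_div_mul_left _ _ hα]

theorem recursion_involution (k₁ : ℝ) (hk₁ : 0 < k₁)
    (a b c : ℝ) (hab : a ≠ b) (hbc : b ≠ c) (hca : c ≠ a)
    (hpos : (a - b) * (b - c) * (c - a) > 0)
    (g ι₁ h₁ : Matrix (Fin 2) (Fin 2) ℝ)
    (hg : g = (1 / Real.sqrt ((a - b) * (b - c) * (c - a))) •
      !![a * (c - b), c * (a - b); c - b, a - b])
    (hι₁ : ι₁ = (1 / Real.sqrt k₁) • !![k₁, 1 + k₁; -k₁, -k₁])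
    (hh₁ : h₁ = g * ι₁ * g⁻¹) :
    moeb h₁ a = b ∧ moeb h₁ b = a ∧
      moeb h₁ c = (k₁ * b * (c - a) + a * (c - b)) / (k₁ * (c - a) + (c - b)) := by
  set D : ℝ := (a - b) * (b - c) * (c - a) with hD
  have hs : Real.sqrt D > 0 := Real.sqrt_pos.mpr hpos
  have ht : Real.sqrt k₁ > 0 := Real.sqrt_pos.mpr hk₁
  set A : Matrix (Fin 2) (Fin 2) ℝ := !![a * (c - b), c * (a - b); c - b, a - b] with hA
  set C : Matrix (Fin 2) (Fin 2) ℝ := !![a - b, -(c * (a - b)); -(c - b), a * (c - b)] with hC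
  have hsq : Real.sqrt D * Real.sqrt D = D := Real.mul_self_sqrt hpos.le
  have hginv : g⁻¹ = (1 / Real.sqrt D) • C := by
    apply inv_eq_right_inv
    rw [hg, smul_mul_assoc, Matrix.mul_smul, smul_smul, hA, hC, Matrix.mul_fin_two]
    have e1 : a * (c - b) * (a - b) + c * (a - b) * -(c - b) = D := by rw [hD]; ring
    have e2 : a * (c - b) * -(c * (a - b)) + c * (a - b) * (a * (c - b)) = 0 := by ring
    have e3 : (c - b) * (a - b) + (a - b) * -(c - b) = 0 := by ring
    have e4 : (c - b) * -(c * (a - b)) + (a - b) * (a * (c - b)) = D := by rw [hD]; ring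
    rw [e1, e2, e3, e4]
    have : (1 / Real.sqrt D * (1 / Real.sqrt D)) = D⁻¹ := by
      rw [div_mul_div_comm, one_mul, hsq, one_div]
    rw [this]
    ext i j
    fin_cases i <;> fin_cases j <;>
      simp [Matrix.one_apply, Matrix.smul_apply] <;>
      field_simp
  have hM : h₁ = (1 / Real.sqrt D * (1 / Real.sqrt k₁) * (1 / Real.sqrt D)) •
      (A * !![k₁, 1 + k₁; -k₁, -k₁] * C) := by
    rw [hh₁, hginv, hg, hι₁]
    rw [smul_mul_assoc, Matrix.mul_smul, smul_mul_assoc, Matrix.mul_smul, smul_smul, smul_mul_assoc, smul_smul]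
    congr 1
    ring
  have hα : (1 / Real.sqrt D * (1 / Real.sqrt k₁) * (1 / Real.sqrt D)) ≠ 0 := by
    positivity
  set P : ℝ := k₁ * (c - a) ^ 2 with hP
  set Q : ℝ := (c - b) ^ 2 with hQ
  have hABC : A * !![k₁, 1 + k₁; -k₁, -k₁] * C =
      !![-(b * P + a * Q), b ^ 2 * P + a ^ 2 * Q; -(P + Q), b * P + a * Q] := by
    rw [hA, hC, Matrix.mul_fin_two, Matrix.mul_fin_two]
    ext i j
    fin_cases i <;> fin_cases j <;>
      simp [hP, hQ] <;> ring
  have hmoeb : ∀ x, moeb h₁ x = moeb !![-(b * P + a * Q), b ^ 2 * P + a ^ 2 * Q;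
      -(P + Q), b * P + a * Q] x := by
    intro x
    rw [hM, moeb_smul _ hα, hABC]
  have hPpos : 0 < P := by rw [hP]; have := sub_ne_zero.mpr hca; positivity
  have hQpos : 0 < Q := by rw [hQ]; have : c - b ≠ 0 := sub_ne_zero.mpr (Ne.symm hbc); positivity
  have hba : b - a ≠ 0 := sub_ne_zero.mpr (Ne.symm hab)
  refine ⟨?_, ?_, ?_⟩
  · rw [hmoeb a]
    rw [moeb_fin_two]
    rw [show -(b * P + a * Q) * a + (b ^ 2 * P + a ^ 2 * Q) = b * (P * (b - a)) by ring,
        show -(P + Q) * a + (b * P + a * Q) = P * (b - a) by ring]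
    exact mul_div_cancel_right₀ b (by positivity)
  · rw [hmoeb b]
    rw [moeb_fin_two]
    rw [show -(b * P + a * Q) * b + (b ^ 2 * P + a ^ 2 * Q) = a * (Q * (a - b)) by ring,
        show -(P + Q) * b + (b * P + a * Q) = Q * (a - b) by ring]
    have hab' : a - b ≠ 0 := sub_ne_zero.mpr hab
    exact mul_div_cancel_right₀ a (by
      exact mul_ne_zero (ne_of_gt hQpos) hab')
  · rw [hmoeb c]
    rw [moeb_fin_two]
    have hbc' : b - c ≠ 0 := sub_ne_zero.mpr hbc
    have hca' : c - a ≠ 0 := sub_ne_zero.mpr hca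
    have hfac : (b - c) * (c - a) ≠ 0 := mul_ne_zero hbc' hca'
    rw [show -(b * P + a * Q) * c + (b ^ 2 * P + a ^ 2 * Q) =
          ((b - c) * (c - a)) * (k₁ * b * (c - a) + a * (c - b)) by rw [hP, hQ]; ring,
        show -(P + Q) * c + (b * P + a * Q) =
          ((b - c) * (c - a)) * (k₁ * (c - a) + (c - b)) by rw [hP, hQ]; ring,
        mul_div_mul_left _ _ hfac]
end

section
/- Let g = [[α, β],[γ, δ]] be an integer matrix with nonzero determinant, γ ≠ 0, gcd(α,β,γ,δ) = 1, and let k = gcd(α,γ), α = kα′, γ = kγ′ with gcd(α′,γ′) = 1. Then for any rational p/q in lowest terms with |p/q − α′/γ′| < 1/|γ|, writing g⁻¹(p/q) = p′/q′ in lowest terms (as a Möbius image), we have |q′| < |q|. -/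
theorem killer_interval (α β γ δ k α' γ' : ℤ)
    (hdet : α * δ - β * γ ≠ 0) (hγ : γ ≠ 0)
    (hgcd : Int.gcd (Int.gcd α β) (Int.gcd γ δ) = 1)
    (hk : (Int.gcd α γ : ℤ) = k) (hα : α = k * α') (hγ' : γ = k * γ')
    (hcop : Int.gcd α' γ' = 1)
    (x : ℚ) (hx : |x - (α' : ℚ) / γ'| < 1 / |(γ : ℚ)|)
    (hden : -(γ : ℚ) * x + α ≠ 0) :
    (((δ : ℚ) * x - β) / (-(γ : ℚ) * x + α)).den < x.den := by
  have hγ'0 : γ' ≠ 0 := by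
    rintro rfl
    simp at hγ'
    exact hγ hγ'
  have hγQ : (γ : ℚ) ≠ 0 := Int.cast_ne_zero.mpr hγ
  have hγ'Q : (γ' : ℚ) ≠ 0 := Int.cast_ne_zero.mpr hγ'0
  set p := x.num with hp
  set q := (x.den : ℤ) with hqdef
  have hq0 : q ≠ 0 := by
    simp [hqdef, x.den_nz]
  have hqpos : (0 : ℚ) < (q : ℚ) := by
    have := x.pos
    push_cast [hqdef]
    exact_mod_cast this
  have hxval : (p : ℚ) = (q : ℚ) * x := by
    have h := Rat.num_div_den x
    rw [div_eq_iff (by exact_mod_cast x.den_nz)] at h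
    rw [hp, hqdef]
    push_cast
    linarith [h]
  -- α as γ * α' / γ'
  have hαγ : (α : ℚ) = (γ : ℚ) * α' / γ' := by
    rw [hα, hγ']
    push_cast
    field_simp
  have key : |(α : ℚ) - γ * x| < 1 := by
    have hrw : (α : ℚ) - γ * x = -((γ : ℚ) * (x - (α' : ℚ) / γ')) := by
      rw [hαγ]; field_simp; ring
    rw [hrw, abs_neg, abs_mul]
    calc |(γ : ℚ)| * |x - (α' : ℚ) / γ'| < |(γ : ℚ)| * (1 / |(γ : ℚ)|) := by
          apply mul_lt_mul_of_pos_left hx (abs_pos.mpr hγQ)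
      _ = 1 := by field_simp
  have hneQ : ((α * q - γ * p : ℤ) : ℚ) ≠ 0 := by
    push_cast
    rw [hxval]
    intro h
    apply hden
    have : (q : ℚ) * (-(γ : ℚ) * x + α) = 0 := by linarith [h]; 
    rcases mul_eq_zero.mp this with h' | h'
    · exact absurd h' (ne_of_gt hqpos)
    · exact h'
  have hne : (α * q - γ * p : ℤ) ≠ 0 := by exact_mod_cast hneQ
  -- bound on the denominator value
  have hboundQ : |((α * q - γ * p : ℤ) : ℚ)| < (q : ℚ) := by
    push_cast
    have hrw : (α : ℚ) * q - γ * p = (q : ℚ) * ((α : ℚ) - γ * x) := by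
      rw [hxval]; ring
    rw [hrw, abs_mul, abs_of_pos hqpos]
    calc (q : ℚ) * |(α : ℚ) - γ * x| < (q : ℚ) * 1 := by
          exact mul_lt_mul_of_pos_left key hqpos
      _ = (q : ℚ) := by ring
  have hbound : |α * q - γ * p| < q := by exact_mod_cast hboundQ
  -- rewrite the Möbius image as a quotient of integers
  have heq : ((δ : ℚ) * x - β) / (-(γ : ℚ) * x + α)
      = ((δ * p - β * q : ℤ) : ℚ) / ((α * q - γ * p : ℤ) : ℚ) := by
    rw [div_eq_div_iff hden hneQ]
    push_cast
    rw [hxval]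
    ring
  rw [heq]
  have hdvd : ((((δ * p - β * q : ℤ) : ℚ) / ((α * q - γ * p : ℤ) : ℚ)).den : ℤ)
      ∣ (α * q - γ * p) := by
    rw [← Rat.divInt_eq_div]
    exact Rat.den_dvd _ _
  have hle : ((((δ * p - β * q : ℤ) : ℚ) / ((α * q - γ * p : ℤ) : ℚ)).den : ℤ)
      ≤ |α * q - γ * p| :=
    Int.le_of_dvd (abs_pos.mpr hne) ((dvd_abs _ _).mpr hdvd)
  have : ((((δ * p - β * q : ℤ) : ℚ) / ((α * q - γ * p : ℤ) : ℚ)).den : ℤ) < q :=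
    lt_of_le_of_lt hle hbound
  rw [hqdef] at this
  exact_mod_cast this
end
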